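/- Fix d ≥ 1, x with λ_j(x) > 0 for all j, and α ∈ ℝ^d. Define for vectors b, h ∈ (0,∞)^d the payoff K(b,h) = Σ_{j=1}^d [2 λ_j(x) l(h_j/λ_j(x)) - b_j l(h_j/b_j) + h_j α_j], where l(u) = u log u - u + 1. Then the pair b* = h* with b*_j = h*_j = λ_j(x) e^{-α_j/2} is a saddle point: K(b, h*) ≤ K(b*, h*) ≤ K(b*, h) for all b, h ∈ (0,∞)^d, and the saddle value equals K(b*,h*) = -2 H(x, -α/2) = -2 Σ_j λ_j(x)(e^{-α_j/2} - 1). -/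

import Mathlib

lemma l_nonneg (u : ℝ) (hu : 0 < u) : 0 ≤ u * Real.log u - u + 1 := by
  have h := Real.log_le_sub_one_of_pos (inv_pos.mpr hu)
  rw [Real.log_inv] at h
  have h2 := mul_le_mul_of_nonneg_left h hu.le
  have h3 : u * u⁻¹ = 1 := mul_inv_cancel₀ hu.ne'
  nlinarith

/-- Prop. 6.2 of Dupuis–Wang–Leder adapted: the pair
`b* = h* = (λ_j(x) e^{-α_j/2})_j` is a saddle point of
`K(b,h) = ∑_j [2λ_j l(h_j/λ_j) - b_j l(h_j/b_j) + h_j α_j]` over coordinatewise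
positive `b, h`, with saddle value `-2H(x,-α/2) = -2∑_j λ_j(x)(e^{-α_j/2}-1)`. -/
theorem stmt5 (d : ℕ) (hd : 1 ≤ d) (lam : Fin d → ℝ) (hlam : ∀ j, 0 < lam j)
    (α : Fin d → ℝ)
    (l : ℝ → ℝ) (hl : ∀ u : ℝ, l u = u * Real.log u - u + 1)
    (K : (Fin d → ℝ) → (Fin d → ℝ) → ℝ)
    (hK : ∀ b g : Fin d → ℝ, K b g =
      ∑ j, (2 * lam j * l (g j / lam j) - b j * l (g j / b j) + g j * α j))
    (bstar : Fin d → ℝ) (hbstar : ∀ j, bstar j = lam j * Real.exp (-(α j) / 2)) :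
    (∀ b : Fin d → ℝ, (∀ j, 0 < b j) → K b bstar ≤ K bstar bstar) ∧
    (∀ g : Fin d → ℝ, (∀ j, 0 < g j) → K bstar bstar ≤ K bstar g) ∧
    K bstar bstar = -2 * ∑ j, lam j * (Real.exp (-(α j) / 2) - 1) := by
  have hBpos : ∀ j, 0 < bstar j := fun j => by
    rw [hbstar j]; exact mul_pos (hlam j) (Real.exp_pos _)
  refine ⟨?_, ?_, ?_⟩
  · intro b hb
    rw [hK, hK]
    apply Finset.sum_le_sum
    intro j _
    have h1 : bstar j / bstar j = 1 := div_self (hBpos j).ne'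
    rw [hl (bstar j / b j), h1, hl 1]
    have key := l_nonneg (bstar j / b j) (div_pos (hBpos j) (hb j))
    have := mul_nonneg (hb j).le key
    simp [Real.log_one]
    nlinarith
  · intro g hg
    rw [hK, hK]
    apply Finset.sum_le_sum
    intro j _
    set L := lam j with hLdef
    set a := α j with hadef
    have hL : 0 < L := hlam j
    have hg' : 0 < g j := hg j
    have hB : 0 < bstar j := hBpos j
    have hBL : bstar j / L = Real.exp (-a / 2) := by
      rw [hbstar j]; field_simp; rfl
    have h2 : Real.log (bstar j / L) = -a / 2 := by rw [hBL, Real.log_exp]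
    have h3 : bstar j / bstar j = 1 := div_self hB.ne'
    have hlogB : Real.log (bstar j) = Real.log L + (-a / 2) := by
      rw [hbstar j, Real.log_mul hL.ne' (Real.exp_pos _).ne', Real.log_exp]
    have h4 : Real.log (g j / bstar j) = Real.log (g j) - Real.log L + a / 2 := by
      rw [Real.log_div hg'.ne' hB.ne', hlogB]; ring
    have h5 : Real.log (g j / L) = Real.log (g j) - Real.log L :=
      Real.log_div hg'.ne' hL.ne'
    have keyB : 0 ≤ g j * (Real.log (g j) - Real.log L + a / 2) - g j + bstar j := by
      have h := l_nonneg (g j / bstar j) (div_pos hg' hB)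
      rw [h4] at h
      have h6 := mul_nonneg hB.le h
      have h7 : bstar j * (g j / bstar j * (Real.log (g j) - Real.log L + a / 2)
          - g j / bstar j + 1)
          = g j * (Real.log (g j) - Real.log L + a / 2) - g j + bstar j := by
        field_simp
      linarith [h7 ▸ h6]
    rw [hl, hl, hl, hl, h2, h3, h4, h5, Real.log_one]
    have hLHS : 2 * L * (bstar j / L * (-a / 2) - bstar j / L + 1)
        - bstar j * (1 * 0 - 1 + 1) + bstar j * a = 2 * L - 2 * bstar j := by
      rw [hBL, hbstar j]; ring
    have hRHS : 2 * L * (g j / L * (Real.log (g j) - Real.log L) - g j / L + 1)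
        - bstar j * (g j / bstar j * (Real.log (g j) - Real.log L + a / 2)
          - g j / bstar j + 1) + g j * a
        = (g j * (Real.log (g j) - Real.log L + a / 2) - g j + bstar j)
          + (2 * L - 2 * bstar j) := by
      field_simp; ring
    rw [hLHS, hRHS]
    linarith
  · rw [hK, Finset.mul_sum]
    apply Finset.sum_congr rfl
    intro j _
    have hB : 0 < bstar j := hBpos j
    have h3 : bstar j / bstar j = 1 := div_self hB.ne'
    have hBL : bstar j / lam j = Real.exp (-(α j) / 2) := by
      rw [hbstar j, mul_comm, mul_div_assoc, div_self (hlam j).ne', mul_one]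
    rw [hl, hl, h3, hBL, Real.log_exp, Real.log_one, hbstar j]
    ring
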